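/- Let θ ∈ (0, π/2) and define γ : (0, π) → ℝ³ by γ(s) = (sin θ·sin s·cos(cot θ·ln(tan(s/2))), sin θ·sin s·sin(cot θ·ln(tan(s/2))), −sin θ·cos s). Then γ has unit Euclidean speed, ‖γ(s)‖ = sin θ for all s (so γ lies on the sphere of radius sin θ centered at the origin), and ⟨γ'(s), W(γ(s))⟩/‖W(γ(s))‖ = cos θ for all s, where W(p) = (−p₂, p₁, 0); that is, γ makes a constant angle θ with the rotational Killing vector field W. -/

import Mathlib

open Real
open scoped RealInnerProductSpace

/-- A point/vector of Euclidean 3-space. -/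
noncomputable def v3 (x y z : ℝ) : EuclideanSpace ℝ (Fin 3) := !₂[x, y, z]

/-- The rotational Killing vector field W(p) = (−p₂, p₁, 0). -/
noncomputable def W (p : EuclideanSpace ℝ (Fin 3)) : EuclideanSpace ℝ (Fin 3) :=
  v3 (-(p 1)) (p 0) 0


set_option maxHeartbeats 1000000 in
lemma hasDerivAt_v3 {f1 f2 f3 : ℝ → ℝ} {d1 d2 d3 s : ℝ}
    (h1 : HasDerivAt f1 d1 s) (h2 : HasDerivAt f2 d2 s) (h3 : HasDerivAt f3 d3 s) :
    HasDerivAt (fun t => v3 (f1 t) (f2 t) (f3 t)) (v3 d1 d2 d3) s := by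
  have hp : HasDerivAt (fun t => (![f1 t, f2 t, f3 t] : Fin 3 → ℝ)) ![d1, d2, d3] s := by
    apply hasDerivAt_pi.2
    intro i
    fin_cases i <;> simpa using ‹_›
  exact (PiLp.hasFDerivAt_toLp (𝕜 := ℝ) 2 _).comp_hasDerivAt s hp


/-- The spherical curve (ω(s) = s) has unit speed, lies on the sphere of
radius sin θ centered at the origin, and makes the constant angle θ with W. -/
theorem stmt_6 (θ : ℝ) (hθ : θ ∈ Set.Ioo 0 (Real.pi / 2))
    (γ : ℝ → EuclideanSpace ℝ (Fin 3))
    (hγ : γ = fun s => v3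
      (Real.sin θ * Real.sin s * Real.cos (Real.cot θ * Real.log (Real.tan (s / 2))))
      (Real.sin θ * Real.sin s * Real.sin (Real.cot θ * Real.log (Real.tan (s / 2))))
      (-(Real.sin θ * Real.cos s))) :
    ∀ s ∈ Set.Ioo (0 : ℝ) Real.pi,
      ‖deriv γ s‖ = 1 ∧
      ‖γ s‖ = Real.sin θ ∧
      ⟪deriv γ s, W (γ s)⟫ / ‖W (γ s)‖ = Real.cos θ := by
  obtain ⟨hθ0, hθ1⟩ := hθ
  have hπ := Real.pi_pos
  have hsinθ : 0 < Real.sin θ := Real.sin_pos_of_pos_of_lt_pi hθ0 (by linarith)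
  obtain ⟨c, hc⟩ : ∃ c, c = Real.cot θ := ⟨_, rfl⟩
  rw [← hc] at hγ
  have hsc : Real.sin θ * c = Real.cos θ := by
    rw [hc, Real.cot_eq_cos_div_sin]; field_simp
  intro s hs
  obtain ⟨hs0, hsπ⟩ := hs
  have hsins : 0 < Real.sin s := Real.sin_pos_of_pos_of_lt_pi hs0 hsπ
  have h2pos : 0 < s / 2 := by linarith
  have h2lt : s / 2 < π / 2 := by linarith
  have hcos2 : 0 < Real.cos (s / 2) := Real.cos_pos_of_mem_Ioo ⟨by linarith, h2lt⟩
  have hsin2 : 0 < Real.sin (s / 2) := Real.sin_pos_of_pos_of_lt_pi h2pos (by linarith)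
  have htan : 0 < Real.tan (s / 2) := Real.tan_pos_of_pos_of_lt_pi_div_two h2pos h2lt
  have hss : Real.sin s = 2 * Real.sin (s / 2) * Real.cos (s / 2) := by
    rw [← Real.sin_two_mul]; ring_nf
  -- derivative of the angle function
  have hud : HasDerivAt (fun t => c * Real.log (Real.tan (t / 2))) (c / Real.sin s) s := by
    have h1 : HasDerivAt (fun t : ℝ => t / 2) (1 / 2) s := (hasDerivAt_id s).div_const 2
    have h2 : HasDerivAt (fun t : ℝ => Real.tan (t / 2))
        (1 / Real.cos (s / 2) ^ 2 * (1 / 2)) s := by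
      have := (Real.hasDerivAt_tan hcos2.ne').comp s h1; exact this
    have h3 := (h2.log htan.ne').const_mul c
    refine h3.congr_deriv ?_
    rw [Real.tan_eq_sin_div_cos, hss]
    field_simp
  set a := Real.cos (c * Real.log (Real.tan (s / 2))) with ha
  set b := Real.sin (c * Real.log (Real.tan (s / 2))) with hb
  have hab : b ^ 2 + a ^ 2 = 1 := Real.sin_sq_add_cos_sq _
  have hpq : Real.sin s ^ 2 + Real.cos s ^ 2 = 1 := Real.sin_sq_add_cos_sq s
  have hθpy : Real.sin θ ^ 2 + Real.cos θ ^ 2 = 1 := Real.sin_sq_add_cos_sq θ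
  -- component derivatives
  have hγ1 : HasDerivAt (fun t => Real.sin θ * Real.sin t * Real.cos (c * Real.log (Real.tan (t / 2))))
      (Real.sin θ * (Real.cos s * a - b * c)) s := by
    have hb' : HasDerivAt (fun t => Real.cos (c * Real.log (Real.tan (t / 2))))
        (-b * (c / Real.sin s)) s := (Real.hasDerivAt_cos _).comp s hud
    have := (((Real.hasDerivAt_sin s).const_mul (Real.sin θ))).mul hb'
    refine this.congr_deriv ?_
    field_simp
    ring
  have hγ2 : HasDerivAt (fun t => Real.sin θ * Real.sin t * Real.sin (c * Real.log (Real.tan (t / 2))))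
      (Real.sin θ * (Real.cos s * b + a * c)) s := by
    have hb' : HasDerivAt (fun t => Real.sin (c * Real.log (Real.tan (t / 2))))
        (a * (c / Real.sin s)) s := (Real.hasDerivAt_sin _).comp s hud
    have := (((Real.hasDerivAt_sin s).const_mul (Real.sin θ))).mul hb'
    refine this.congr_deriv ?_
    field_simp
    ring
  have hγ3 : HasDerivAt (fun t => -(Real.sin θ * Real.cos t)) (Real.sin θ * Real.sin s) s := by
    have := ((Real.hasDerivAt_cos s).const_mul (Real.sin θ)).neg
    refine this.congr_deriv ?_
    ring
  have hD : HasDerivAt γ (v3 (Real.sin θ * (Real.cos s * a - b * c))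
      (Real.sin θ * (Real.cos s * b + a * c)) (Real.sin θ * Real.sin s)) s := by
    rw [hγ]; exact hasDerivAt_v3 hγ1 hγ2 hγ3
  have hderiv := hD.deriv
  refine ⟨?_, ?_, ?_⟩
  · rw [hderiv, EuclideanSpace.norm_eq]
    simp only [v3, Fin.sum_univ_three, Matrix.cons_val_zero, Matrix.cons_val_one,
      Matrix.head_cons, Matrix.cons_val_two, Matrix.tail_cons, Real.norm_eq_abs, sq_abs,
      PiLp.toLp_apply, WithLp.ofLp_toLp]
    rw [show (Real.sin θ * (Real.cos s * a - b * c)) ^ 2 +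
        (Real.sin θ * (Real.cos s * b + a * c)) ^ 2 + (Real.sin θ * Real.sin s) ^ 2 = 1 by
      linear_combination (Real.sin θ^2*(Real.cos s^2 + c^2)) * hab + Real.sin θ^2 * hpq
        + (Real.sin θ * c + Real.cos θ) * hsc + hθpy]
    exact Real.sqrt_one
  · rw [hγ]
    rw [EuclideanSpace.norm_eq]
    simp only [v3, Fin.sum_univ_three, Matrix.cons_val_zero, Matrix.cons_val_one,
      Matrix.head_cons, Matrix.cons_val_two, Matrix.tail_cons, Real.norm_eq_abs, sq_abs,
      PiLp.toLp_apply, WithLp.ofLp_toLp]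
    rw [show (Real.sin θ * Real.sin s * a) ^ 2 + (Real.sin θ * Real.sin s * b) ^ 2 +
        (-(Real.sin θ * Real.cos s)) ^ 2 = Real.sin θ ^ 2 by
      linear_combination (Real.sin θ^2*Real.sin s^2) * hab + Real.sin θ^2 * hpq]
    exact Real.sqrt_sq hsinθ.le
  · have hWγ : W (γ s) = v3 (-(Real.sin θ * Real.sin s * b)) (Real.sin θ * Real.sin s * a) 0 := by
      rw [hγ]
      simp [W, v3]
      exact ⟨Or.inl rfl, Or.inl rfl⟩
    have hnum : ⟪deriv γ s, W (γ s)⟫ = Real.cos θ * Real.sin s * Real.sin θ := by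
      rw [hderiv, hWγ]
      simp only [v3, PiLp.inner_apply, RCLike.inner_apply, conj_trivial, Fin.sum_univ_three,
        Matrix.cons_val_zero, Matrix.cons_val_one, Matrix.head_cons, Matrix.cons_val_two,
        Matrix.tail_cons, PiLp.toLp_apply, WithLp.ofLp_toLp]
      linear_combination (Real.sin θ^2*Real.sin s*c) * hab + (Real.sin θ*Real.sin s) * hsc
    have hden : ‖W (γ s)‖ = Real.sin θ * Real.sin s := by
      rw [hWγ, EuclideanSpace.norm_eq]
      simp only [v3, Fin.sum_univ_three, Matrix.cons_val_zero, Matrix.cons_val_one,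
        Matrix.head_cons, Matrix.cons_val_two, Matrix.tail_cons, Real.norm_eq_abs, sq_abs,
      PiLp.toLp_apply, WithLp.ofLp_toLp]
      rw [show (-(Real.sin θ * Real.sin s * b)) ^ 2 + (Real.sin θ * Real.sin s * a) ^ 2 +
          (0:ℝ) ^ 2 = (Real.sin θ * Real.sin s) ^ 2 by
        linear_combination (Real.sin θ^2*Real.sin s^2) * hab]
      exact Real.sqrt_sq (by positivity)
    rw [hnum, hden]
    field_simp
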